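/- Let Σ = {1,…,d}, let ξ be a symmetric probability measure on Δ(Σ), let κ be a valid selection kernel, and let (U,P,A) have joint law λ ⊗ ξ ⊗ κ, where λ is the uniform distribution on [0,1], P ~ ξ, and A ~ κ(·|U,P). Fix ε ∈ (0,1/2), let E be the event {P(A) > ε}, and assume P(E) ≥ 1/4. For a ∈ Σ, let μ(·|a) denote the conditional law of U given {A = a} ∩ E. Then χ²(μ(·|a), λ) ≤ 16 d² · ( E[ √( P_ε^c(a)(1 − P_ε^c(a)) ) ] )², where the expectation is over P ~ ξ. -/

import Mathlib

open MeasureTheory ProbabilityTheory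
open scoped ENNReal

/-- The probability measure on `Fin d` with mass function `v`. -/
noncomputable def vecMeasure {d : ℕ} (v : Fin d → ℝ) : Measure (Fin d) :=
  ∑ a, ENNReal.ofReal (v a) • Measure.dirac a

/-- The joint law `λ ⊗ ξ ⊗ κ` of a triple `(U, P, A)` where `U` is uniform on
`[0,1]`, `P ∼ ξ` and `A ∼ κ(·|U,P)`. -/
noncomputable def tripleLaw {d : ℕ} (ξ : Measure (Fin d → ℝ))
    (κ : ℝ → (Fin d → ℝ) → Fin d → ℝ) : Measure ((ℝ × (Fin d → ℝ)) × Fin d) :=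
  ((volume.restrict (Set.Icc (0:ℝ) 1)).prod ξ).bind
    (fun x => (Measure.dirac x).prod (vecMeasure (κ x.1 x.2)))

/-- `p_ε^c(a) = p(a)·1(p(a) > ε)`. -/
noncomputable def pepsC {d : ℕ} (ε : ℝ) (p : Fin d → ℝ) : Fin d → ℝ :=
  fun a => if ε < p a then p a else 0

/-- The chi-squared divergence `χ²(μ,ν) = ∫ (dμ/dν − 1)² dν`. -/
noncomputable def chiSq (μ ν : Measure ℝ) : ℝ :=
  ∫ x, ((μ.rnDeriv ν x).toReal - 1) ^ 2 ∂ν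

section Aux

variable {d : ℕ}

lemma vecMeasure_apply (v : Fin d → ℝ) (s : Set (Fin d)) :
    vecMeasure v s = ∑ b, s.indicator (fun b => ENNReal.ofReal (v b)) b := by
  simp only [vecMeasure, Measure.finset_sum_apply, Measure.smul_apply, Measure.dirac_apply,
    smul_eq_mul]
  refine Finset.sum_congr rfl fun b _ => ?_
  by_cases hb : b ∈ s <;> simp [hb]

instance vecMeasure_finite (v : Fin d → ℝ) : IsFiniteMeasure (vecMeasure v) := by
  constructor
  rw [vecMeasure_apply]
  refine ENNReal.sum_lt_top.mpr fun _ _ => ?_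
  exact lt_of_le_of_lt (Set.indicator_le_self _ _ _) ENNReal.ofReal_lt_top

/-- uniform measure on `[0,1]` -/
noncomputable abbrev unif : Measure ℝ := volume.restrict (Set.Icc (0:ℝ) 1)

instance : IsProbabilityMeasure unif := by
  constructor
  rw [Measure.restrict_apply_univ, Real.volume_Icc]
  norm_num

lemma tripleLaw_apply (ξ : Measure (Fin d → ℝ)) [SFinite ξ]
    (κ : ℝ → (Fin d → ℝ) → Fin d → ℝ)
    (hκ_meas : Measurable fun x : ℝ × (Fin d → ℝ) => κ x.1 x.2)
    {s : Set ((ℝ × (Fin d → ℝ)) × Fin d)} (hs : MeasurableSet s) :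
    tripleLaw ξ κ s = ∫⁻ x, (∑ b, s.indicator (fun y => ENNReal.ofReal (κ y.1.1 y.1.2 y.2)) (x, b)) ∂(unif.prod ξ) := by
  classical
  rw [tripleLaw, Measure.bind_apply hs]
  · refine lintegral_congr fun x => ?_
    rw [Measure.dirac_prod, Measure.map_apply measurable_prodMk_left hs, vecMeasure_apply]
    rfl
  · apply Measurable.aemeasurable
    rw [Measure.measurable_measure]
    intro t ht
    have hrw : (fun x : ℝ × (Fin d → ℝ) => ((Measure.dirac x).prod (vecMeasure (κ x.1 x.2))) t)
        = fun x => ∑ b, if (x, b) ∈ t then ENNReal.ofReal (κ x.1 x.2 b) else 0 := by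
      funext x
      rw [Measure.dirac_prod, Measure.map_apply measurable_prodMk_left ht, vecMeasure_apply]
      exact Finset.sum_congr rfl fun b _ => by rw [Set.indicator_apply]; rfl
    rw [hrw]
    refine Finset.measurable_sum _ fun b _ => ?_
    refine Measurable.ite ?_ ?_ measurable_const
    · exact measurable_prodMk_right ht
    · exact ENNReal.measurable_ofReal.comp ((measurable_pi_apply b).comp hκ_meas)


variable {ξ : Measure (Fin d → ℝ)} {κ : ℝ → (Fin d → ℝ) → Fin d → ℝ} {ε : ℝ}

lemma measurableSet_E (ε : ℝ) (b : Fin d) :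
    MeasurableSet {x : (ℝ × (Fin d → ℝ)) × Fin d | x.2 = b ∧ ε < x.1.2 x.2} := by
  have h : {x : (ℝ × (Fin d → ℝ)) × Fin d | x.2 = b ∧ ε < x.1.2 x.2}
      = (Prod.snd ⁻¹' {b}) ∩ ((fun x : (ℝ × (Fin d → ℝ)) × Fin d => x.1.2 b) ⁻¹' (Set.Ioi ε)) := by
    ext x
    constructor
    · rintro ⟨h1, h2⟩; exact ⟨h1, by rwa [h1] at h2⟩
    · rintro ⟨h1, h2⟩
      refine ⟨h1, ?_⟩
      simp only [Set.mem_preimage, Set.mem_singleton_iff] at h1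
      rw [h1]; exact h2
  rw [h]
  exact (measurable_snd (measurableSet_singleton b)).inter
    (((measurable_pi_apply b).comp (measurable_snd.comp measurable_fst)) measurableSet_Ioi)

/-- the (unnormalized) density of `U` on the event `{A = b, P(A) > ε}` -/
noncomputable def Gdens (ξ : Measure (Fin d → ℝ)) (κ : ℝ → (Fin d → ℝ) → Fin d → ℝ)
    (ε : ℝ) (b : Fin d) : ℝ → ℝ≥0∞ :=
  fun u => ∫⁻ p, {p : Fin d → ℝ | ε < p b}.indicator (fun p => ENNReal.ofReal (κ u p b)) p ∂ξ

lemma measurable_Gdens [SFinite ξ]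
    (hκ_meas : Measurable fun x : ℝ × (Fin d → ℝ) => κ x.1 x.2) (b : Fin d) :
    Measurable (Gdens ξ κ ε b) := by
  apply Measurable.lintegral_prod_right
  exact ((ENNReal.measurable_ofReal.comp ((measurable_pi_apply b).comp hκ_meas))).indicator
    ((measurable_pi_apply b).comp measurable_snd measurableSet_Ioi)

lemma tripleLaw_E_inter [SFinite ξ]
    (hκ_meas : Measurable fun x : ℝ × (Fin d → ℝ) => κ x.1 x.2) (b : Fin d)
    {t : Set ℝ} (ht : MeasurableSet t) :
    tripleLaw ξ κ ({x | x.1.1 ∈ t} ∩ {x | x.2 = b ∧ ε < x.1.2 x.2})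
      = ∫⁻ u in t, Gdens ξ κ ε b u ∂unif := by
  classical
  have hsmeas : MeasurableSet ({x : (ℝ × (Fin d → ℝ)) × Fin d | x.1.1 ∈ t}
      ∩ {x | x.2 = b ∧ ε < x.1.2 x.2}) :=
    ((measurable_fst.comp measurable_fst) ht).inter (measurableSet_E ε b)
  rw [tripleLaw_apply ξ κ hκ_meas hsmeas]
  have hsum : ∀ x : ℝ × (Fin d → ℝ),
      (∑ c, (({x : (ℝ × (Fin d → ℝ)) × Fin d | x.1.1 ∈ t} ∩ {x | x.2 = b ∧ ε < x.1.2 x.2}).indicator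
        (fun y => ENNReal.ofReal (κ y.1.1 y.1.2 y.2)) (x, c)))
      = (if x.1 ∈ t then (if ε < x.2 b then ENNReal.ofReal (κ x.1 x.2 b) else 0) else 0) := by
    intro x
    rw [Finset.sum_eq_single b]
    · rw [Set.indicator_apply]
      by_cases h1 : x.1 ∈ t <;> by_cases h2 : ε < x.2 b <;>
        simp [Set.mem_inter_iff, Set.mem_setOf_eq, h1, h2]
    · intro c _ hc
      rw [Set.indicator_apply, if_neg]
      rintro ⟨-, hcb, -⟩
      exact hc hcb
    · intro h; exact absurd (Finset.mem_univ b) h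
  simp_rw [hsum]
  rw [MeasureTheory.lintegral_prod]
  · rw [← lintegral_indicator ht]
    refine lintegral_congr fun u => ?_
    rw [Set.indicator_apply]
    by_cases h1 : u ∈ t
    · simp only [h1, if_true]
      refine lintegral_congr fun p => ?_
      rw [Set.indicator_apply]
      rfl
    · simp [h1]
  · refine Measurable.aemeasurable ?_
    refine Measurable.ite (measurable_fst ht) ?_ measurable_const
    exact Measurable.ite (((measurable_pi_apply b).comp measurable_snd) measurableSet_Ioi)
      (ENNReal.measurable_ofReal.comp ((measurable_pi_apply b).comp hκ_meas)) measurable_const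


/-- Cauchy-Schwarz for bounded functions. -/
lemma cs_bounded {α : Type*} [MeasurableSpace α] {μ : Measure α} [IsFiniteMeasure μ]
    {f g : α → ℝ} (hf : AEStronglyMeasurable f μ) (hg : AEStronglyMeasurable g μ)
    (hf1 : ∀ x, |f x| ≤ 1) (hg1 : ∀ x, |g x| ≤ 1) :
    ∫ x, f x * g x ∂μ ≤ Real.sqrt (∫ x, f x ^ 2 ∂μ) * Real.sqrt (∫ x, g x ^ 2 ∂μ) := by
  have h2 : (2:ℝ).HolderConjugate 2 := by constructor <;> norm_num
  have hmf : MemLp f (ENNReal.ofReal 2) μ :=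
    MemLp.of_bound hf 1 (Filter.Eventually.of_forall fun x => by
      simpa [Real.norm_eq_abs] using hf1 x)
  have hmg : MemLp g (ENNReal.ofReal 2) μ :=
    MemLp.of_bound hg 1 (Filter.Eventually.of_forall fun x => by
      simpa [Real.norm_eq_abs] using hg1 x)
  have key := integral_mul_norm_le_Lp_mul_Lq h2 hmf hmg
  have e1 : ∀ (h : α → ℝ), (∫ x, ‖h x‖ ^ (2:ℝ) ∂μ) = ∫ x, h x ^ 2 ∂μ := by
    intro h
    refine integral_congr_ae (Filter.Eventually.of_forall fun x => ?_)
    show ‖h x‖ ^ (2:ℝ) = h x ^ 2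
    rw [show ((2:ℝ) = ((2:ℕ):ℝ)) by norm_num, Real.rpow_natCast]
    rw [Real.norm_eq_abs, sq_abs]
  rw [e1 f, e1 g] at key
  have e2 : ∀ (c : ℝ), c ^ (1/(2:ℝ)) = Real.sqrt c := fun c => (Real.sqrt_eq_rpow c).symm
  rw [e2, e2] at key
  refine le_trans ?_ key
  have hint1 : Integrable (fun x => f x * g x) μ := by
    refine Integrable.mono' (integrable_const (1:ℝ)) (hf.mul hg)
      (Filter.Eventually.of_forall fun x => ?_)
    rw [Real.norm_eq_abs, abs_mul]
    exact mul_le_one₀ (hf1 x) (abs_nonneg _) (hg1 x)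
  have hint2 : Integrable (fun x => ‖f x‖ * ‖g x‖) μ := by
    refine Integrable.mono' (integrable_const (1:ℝ)) (hf.norm.mul hg.norm)
      (Filter.Eventually.of_forall fun x => ?_)
    rw [Real.norm_eq_abs, abs_mul, abs_norm, abs_norm]
    exact mul_le_one₀ (hf1 x) (norm_nonneg _) (hg1 x)
  refine integral_mono hint1 hint2 fun x => ?_
  calc f x * g x ≤ |f x * g x| := le_abs_self _
    _ = ‖f x‖ * ‖g x‖ := by rw [abs_mul]; rfl


lemma kappa_le_one (hκ_nonneg : ∀ u p a, 0 ≤ κ u p a) (hκ_sum : ∀ u p, ∑ a, κ u p a = 1)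
    (u : ℝ) (p : Fin d → ℝ) (b : Fin d) : κ u p b ≤ 1 := by
  calc κ u p b ≤ ∑ c, κ u p c :=
        Finset.single_le_sum (fun c _ => hκ_nonneg u p c) (Finset.mem_univ b)
    _ = 1 := hκ_sum u p

/-- real version of the density -/
noncomputable def Freal (ξ : Measure (Fin d → ℝ)) (κ : ℝ → (Fin d → ℝ) → Fin d → ℝ)
    (ε : ℝ) (b : Fin d) : ℝ → ℝ :=
  fun u => ∫ p, (if ε < p b then κ u p b else 0) ∂ξ

lemma meas_ite (hκ_meas : Measurable fun x : ℝ × (Fin d → ℝ) => κ x.1 x.2) (b : Fin d) :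
    Measurable fun x : ℝ × (Fin d → ℝ) => if ε < x.2 b then κ x.1 x.2 b else 0 :=
  Measurable.ite (((measurable_pi_apply b).comp measurable_snd) measurableSet_Ioi)
    ((measurable_pi_apply b).comp hκ_meas) measurable_const

lemma measurable_Freal [SFinite ξ]
    (hκ_meas : Measurable fun x : ℝ × (Fin d → ℝ) => κ x.1 x.2) (b : Fin d) :
    Measurable (Freal ξ κ ε b) :=
  (StronglyMeasurable.integral_prod_right'
    (f := fun x : ℝ × (Fin d → ℝ) => if ε < x.2 b then κ x.1 x.2 b else 0)
    (meas_ite hκ_meas b).stronglyMeasurable).measurable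

lemma integrable_ite [IsFiniteMeasure ξ]
    (hκ_meas : Measurable fun x : ℝ × (Fin d → ℝ) => κ x.1 x.2)
    (hκ_nonneg : ∀ u p a, 0 ≤ κ u p a) (hκ_sum : ∀ u p, ∑ a, κ u p a = 1)
    (u : ℝ) (b : Fin d) :
    Integrable (fun p => if ε < p b then κ u p b else 0) ξ := by
  refine Integrable.mono' (integrable_const (1:ℝ))
    ((meas_ite hκ_meas b).comp (measurable_const.prodMk measurable_id)).aestronglyMeasurable
    (Filter.Eventually.of_forall fun p => ?_)
  rw [Real.norm_eq_abs]
  split_ifs with h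
  · rw [abs_of_nonneg (hκ_nonneg u p b)]; exact kappa_le_one hκ_nonneg hκ_sum u p b
  · simp

lemma Freal_nonneg (hκ_nonneg : ∀ u p a, 0 ≤ κ u p a) (u : ℝ) (b : Fin d) :
    0 ≤ Freal ξ κ ε b u :=
  integral_nonneg fun p => by dsimp only; split_ifs with h; exacts [hκ_nonneg u p b, le_refl 0]

lemma Freal_le_one [IsProbabilityMeasure ξ]
    (hκ_meas : Measurable fun x : ℝ × (Fin d → ℝ) => κ x.1 x.2)
    (hκ_nonneg : ∀ u p a, 0 ≤ κ u p a) (hκ_sum : ∀ u p, ∑ a, κ u p a = 1)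
    (u : ℝ) (b : Fin d) : Freal ξ κ ε b u ≤ 1 := by
  have : Freal ξ κ ε b u ≤ ∫ _, (1:ℝ) ∂ξ := by
    refine integral_mono (integrable_ite hκ_meas hκ_nonneg hκ_sum u b) (integrable_const 1)
      fun p => ?_
    dsimp only
    split_ifs with h
    · exact kappa_le_one hκ_nonneg hκ_sum u p b
    · norm_num
  simpa using this

lemma Gdens_eq [IsProbabilityMeasure ξ]
    (hκ_meas : Measurable fun x : ℝ × (Fin d → ℝ) => κ x.1 x.2)
    (hκ_nonneg : ∀ u p a, 0 ≤ κ u p a) (hκ_sum : ∀ u p, ∑ a, κ u p a = 1)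
    (u : ℝ) (b : Fin d) :
    Gdens ξ κ ε b u = ENNReal.ofReal (Freal ξ κ ε b u) := by
  rw [Freal, ofReal_integral_eq_lintegral_ofReal (integrable_ite hκ_meas hκ_nonneg hκ_sum u b)
    (Filter.Eventually.of_forall fun p => by
      dsimp only; split_ifs with h; exacts [hκ_nonneg u p b, le_refl 0])]
  refine lintegral_congr fun p => ?_
  by_cases h : ε < p b <;> simp [Set.indicator_apply, h]

lemma ae_simplex [IsProbabilityMeasure ξ]
    (hξ_simplex : ξ {p | (∀ a, 0 ≤ p a) ∧ ∑ a, p a = 1} = 1) :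
    ∀ᵐ p ∂ξ, (∀ a, 0 ≤ p a) ∧ ∑ a, p a = 1 := by
  have hS : MeasurableSet {p : Fin d → ℝ | (∀ a, 0 ≤ p a) ∧ ∑ a, p a = 1} := by
    have : {p : Fin d → ℝ | (∀ a, 0 ≤ p a) ∧ ∑ a, p a = 1}
        = (⋂ c, {p : Fin d → ℝ | 0 ≤ p c}) ∩ {p : Fin d → ℝ | ∑ a, p a = 1} := by
      ext p; simp [Set.mem_iInter]
    rw [this]
    refine MeasurableSet.inter (MeasurableSet.iInter fun c =>
      measurableSet_le measurable_const (measurable_pi_apply c)) ?_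
    exact (Finset.measurable_sum Finset.univ fun c _ => measurable_pi_apply c)
      (measurableSet_singleton 1)
  have hcompl : ξ {p : Fin d → ℝ | (∀ a, 0 ≤ p a) ∧ ∑ a, p a = 1}ᶜ = 0 :=
    (prob_compl_eq_zero_iff hS).mpr hξ_simplex
  exact (ae_iff.mpr hcompl)

lemma integral_kappa_unif {p : Fin d → ℝ} (hp1 : ∀ c, 0 ≤ p c) (hp2 : ∑ c, p c = 1)
    (hκ_valid : ∀ p : Fin d → ℝ, (∀ a, 0 ≤ p a) → ∑ a, p a = 1 →
      ∀ a, (∫ u in (0:ℝ)..1, κ u p a) = p a)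
    (b : Fin d) : ∫ u, κ u p b ∂unif = p b := by
  have h1 : ∫ u, κ u p b ∂unif = ∫ u in Set.Ioc (0:ℝ) 1, κ u p b := by
    exact integral_Icc_eq_integral_Ioc
  rw [h1, ← intervalIntegral.integral_of_le zero_le_one]
  exact hκ_valid p hp1 hp2 b

lemma integral_Freal [IsProbabilityMeasure ξ]
    (hκ_meas : Measurable fun x : ℝ × (Fin d → ℝ) => κ x.1 x.2)
    (hκ_nonneg : ∀ u p a, 0 ≤ κ u p a) (hκ_sum : ∀ u p, ∑ a, κ u p a = 1)
    (hκ_valid : ∀ p : Fin d → ℝ, (∀ a, 0 ≤ p a) → ∑ a, p a = 1 →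
      ∀ a, (∫ u in (0:ℝ)..1, κ u p a) = p a)
    (hξ_simplex : ξ {p | (∀ a, 0 ≤ p a) ∧ ∑ a, p a = 1} = 1) (b : Fin d) :
    ∫ u, Freal ξ κ ε b u ∂unif = ∫ p, pepsC ε p b ∂ξ := by
  have hswap : ∫ u, Freal ξ κ ε b u ∂unif
      = ∫ p, (∫ u, (if ε < p b then κ u p b else 0) ∂unif) ∂ξ := by
    refine integral_integral_swap ?_
    refine Integrable.mono' (integrable_const (1:ℝ)) (meas_ite hκ_meas b).aestronglyMeasurable
      (Filter.Eventually.of_forall fun x => ?_)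
    rw [Function.uncurry, Real.norm_eq_abs]
    split_ifs with h
    · rw [abs_of_nonneg (hκ_nonneg x.1 x.2 b)]; exact kappa_le_one hκ_nonneg hκ_sum x.1 x.2 b
    · simp
  rw [hswap]
  refine integral_congr_ae ?_
  filter_upwards [ae_simplex hξ_simplex] with p hp
  by_cases h : ε < p b
  · simp only [h, if_true, pepsC]
    exact integral_kappa_unif hp.1 hp.2 hκ_valid b
  · simp [h, pepsC]

lemma Z_sym [IsProbabilityMeasure ξ]
    (hξ_sym : ∀ σ : Equiv.Perm (Fin d), Measure.map (fun p => p ∘ σ) ξ = ξ)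
    (a b : Fin d) : ∫ p, pepsC ε p b ∂ξ = ∫ p, pepsC ε p a ∂ξ := by
  have hmap : Measurable fun p : Fin d → ℝ => p ∘ (Equiv.swap a b) :=
    measurable_pi_lambda _ fun c => measurable_pi_apply _
  have hpeps : Measurable fun p : Fin d → ℝ => pepsC ε p b :=
    Measurable.ite ((measurable_pi_apply b) measurableSet_Ioi)
      (measurable_pi_apply b) measurable_const
  conv_lhs => rw [← hξ_sym (Equiv.swap a b)]
  rw [integral_map hmap.aemeasurable hpeps.aestronglyMeasurable]
  refine integral_congr_ae (Filter.Eventually.of_forall fun p => ?_)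
  simp only [pepsC, Function.comp_apply, Equiv.swap_apply_right]

lemma tripleLaw_event_split [IsProbabilityMeasure ξ]
    (hκ_meas : Measurable fun x : ℝ × (Fin d → ℝ) => κ x.1 x.2) :
    tripleLaw ξ κ {x | ε < x.1.2 x.2}
      = ∑ b, tripleLaw ξ κ {x | x.2 = b ∧ ε < x.1.2 x.2} := by
  have hU : {x : (ℝ × (Fin d → ℝ)) × Fin d | ε < x.1.2 x.2}
      = ⋃ b, {x | x.2 = b ∧ ε < x.1.2 x.2} := by
    ext x
    simp only [Set.mem_setOf_eq, Set.mem_iUnion]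
    constructor
    · intro h; exact ⟨x.2, rfl, h⟩
    · rintro ⟨b, -, h⟩; exact h
  rw [hU, measure_iUnion ?_ fun b => measurableSet_E ε b, tsum_fintype]
  intro b c hbc
  rw [Function.onFun, Set.disjoint_left]
  rintro x ⟨h1, -⟩ ⟨h2, -⟩
  exact hbc (h1 ▸ h2 ▸ rfl)


lemma sqrt_peps_le_half (x : ℝ) : Real.sqrt (x * (1 - x)) ≤ 1/2 := by
  have h := Real.sqrt_le_sqrt (show x * (1 - x) ≤ (1:ℝ)/4 by nlinarith [sq_nonneg (x - 1/2)])
  rwa [show ((1:ℝ)/4) = (1/2)^2 by norm_num, Real.sqrt_sq (by norm_num : (0:ℝ) ≤ 1/2)] at h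

lemma measurable_pepsC (b : Fin d) : Measurable fun p : Fin d → ℝ => pepsC ε p b :=
  Measurable.ite ((measurable_pi_apply b) measurableSet_Ioi)
    (measurable_pi_apply b) measurable_const

lemma integrable_sqrt_peps [IsProbabilityMeasure ξ] (b : Fin d) :
    Integrable (fun p => Real.sqrt (pepsC ε p b * (1 - pepsC ε p b))) ξ := by
  refine Integrable.mono' (integrable_const (1/2 : ℝ))
    (Real.continuous_sqrt.measurable.comp ((measurable_pepsC b).mul
      (measurable_const.sub (measurable_pepsC b)))).aestronglyMeasurable
    (Filter.Eventually.of_forall fun p => ?_)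
  rw [Real.norm_eq_abs, abs_of_nonneg (Real.sqrt_nonneg _)]
  exact sqrt_peps_le_half _

lemma T_le [IsProbabilityMeasure ξ]
    (hκ_meas : Measurable fun x : ℝ × (Fin d → ℝ) => κ x.1 x.2)
    (hκ_nonneg : ∀ u p a, 0 ≤ κ u p a) (hκ_sum : ∀ u p, ∑ a, κ u p a = 1)
    (hκ_valid : ∀ p : Fin d → ℝ, (∀ a, 0 ≤ p a) → ∑ a, p a = 1 →
      ∀ a, (∫ u in (0:ℝ)..1, κ u p a) = p a)
    (hξ_simplex : ξ {p | (∀ a, 0 ≤ p a) ∧ ∑ a, p a = 1} = 1)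
    (hε : 0 < ε) (b : Fin d) :
    ∫ u, (Freal ξ κ ε b u - ∫ p, pepsC ε p b ∂ξ)^2 ∂unif
      ≤ (∫ p, Real.sqrt (pepsC ε p b * (1 - pepsC ε p b)) ∂ξ)^2 := by
  set Z := ∫ p, pepsC ε p b ∂ξ with hZdef
  set h : ℝ → (Fin d → ℝ) → ℝ := fun u p => if ε < p b then κ u p b - min (p b) 1 else 0
    with hhdef
  have hmeas_h : Measurable fun x : ℝ × (Fin d → ℝ) => h x.1 x.2 := by
    refine Measurable.ite (((measurable_pi_apply b).comp measurable_snd) measurableSet_Ioi)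
      (((measurable_pi_apply b).comp hκ_meas).sub
        (Measurable.min ((measurable_pi_apply b).comp measurable_snd) measurable_const))
      measurable_const
  have hbound : ∀ u p, |h u p| ≤ 1 := by
    intro u p
    simp only [hhdef]
    split_ifs with hc
    · rw [abs_le]
      have h0 : 0 ≤ κ u p b := hκ_nonneg u p b
      have h1 : κ u p b ≤ 1 := kappa_le_one hκ_nonneg hκ_sum u p b
      have h2 : min (p b) 1 ≤ 1 := min_le_right _ _
      have h3 : 0 ≤ min (p b) 1 := le_min (le_of_lt (lt_trans hε hc)) zero_le_one
      constructor <;> linarith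
    · simp
  have hmeas_hu : ∀ p, Measurable fun u => h u p := fun p =>
    hmeas_h.comp (measurable_id.prodMk measurable_const)
  have hmeas_hp : ∀ u, Measurable fun p => h u p := fun u =>
    hmeas_h.comp (measurable_const.prodMk measurable_id)
  have hint_bdd : ∀ {α : Type} [MeasurableSpace α] (μ : Measure α) [IsProbabilityMeasure μ]
      (f : α → ℝ), Measurable f → (∀ x, |f x| ≤ 1) → Integrable f μ := by
    intro α _ μ _ f hf hb
    exact Integrable.mono' (integrable_const 1) hf.aestronglyMeasurable
      (Filter.Eventually.of_forall fun x => by rw [Real.norm_eq_abs]; exact hb x)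
  -- step 1 : F u - Z = ∫ p, h u p
  have hminmeas : Measurable fun p : Fin d → ℝ => if ε < p b then min (p b) 1 else 0 :=
    Measurable.ite ((measurable_pi_apply b) measurableSet_Ioi)
      (Measurable.min (measurable_pi_apply b) measurable_const) measurable_const
  have hminbdd : ∀ p : Fin d → ℝ, |(if ε < p b then min (p b) 1 else 0)| ≤ 1 := by
    intro p
    split_ifs with hc
    · rw [abs_of_nonneg (le_min (le_of_lt (lt_trans hε hc)) zero_le_one)]
      exact min_le_right _ _
    · simp
  have step1 : ∀ u, Freal ξ κ ε b u - Z = ∫ p, h u p ∂ξ := by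
    intro u
    have e1 : ∫ p, h u p ∂ξ = (∫ p, (if ε < p b then κ u p b else 0) ∂ξ)
        - ∫ p, (if ε < p b then min (p b) 1 else 0) ∂ξ := by
      rw [← integral_sub (integrable_ite hκ_meas hκ_nonneg hκ_sum u b)
        (hint_bdd ξ _ hminmeas hminbdd)]
      refine integral_congr_ae (Filter.Eventually.of_forall fun p => ?_)
      simp only [hhdef]
      split_ifs with hc <;> simp
    have e2 : ∫ p, (if ε < p b then min (p b) 1 else 0) ∂ξ = Z := by
      refine integral_congr_ae ?_
      filter_upwards [ae_simplex hξ_simplex] with p hp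
      have hpb1 : p b ≤ 1 := by
        calc p b ≤ ∑ c, p c := Finset.single_le_sum (fun c _ => hp.1 c) (Finset.mem_univ b)
          _ = 1 := hp.2
      simp only [pepsC, min_eq_left hpb1]
    rw [e1, e2, Freal]
  -- step 2 : a.e. L² bound
  have step2 : ∀ᵐ p ∂ξ, ∫ u, (h u p)^2 ∂unif ≤ pepsC ε p b * (1 - pepsC ε p b) := by
    filter_upwards [ae_simplex hξ_simplex] with p hp
    by_cases hc : ε < p b
    · have hpb1 : p b ≤ 1 := by
        calc p b ≤ ∑ c, p c := Finset.single_le_sum (fun c _ => hp.1 c) (Finset.mem_univ b)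
          _ = 1 := hp.2
      have hpb0 : 0 ≤ p b := hp.1 b
      have hmκ : Measurable fun u => κ u p b :=
        ((measurable_pi_apply b).comp hκ_meas).comp (measurable_id.prodMk measurable_const)
      have hiκ : Integrable (fun u => κ u p b) unif :=
        hint_bdd unif _ hmκ fun u => by
          rw [abs_of_nonneg (hκ_nonneg u p b)]; exact kappa_le_one hκ_nonneg hκ_sum u p b
      have hiκ2 : Integrable (fun u => κ u p b ^ 2) unif :=
        hint_bdd unif _ (hmκ.pow measurable_const) fun u => by
          have h0 := hκ_nonneg u p b
          have h1 := kappa_le_one hκ_nonneg hκ_sum u p b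
          rw [abs_of_nonneg (by positivity)]
          nlinarith
      have hrw : ∀ u, (h u p)^2 = κ u p b ^ 2 - 2 * p b * κ u p b + p b ^ 2 := by
        intro u
        simp only [hhdef, hc, if_true, min_eq_left hpb1]
        ring
      have hκint : ∫ u, κ u p b ∂unif = p b := integral_kappa_unif hp.1 hp.2 hκ_valid b
      have hκ2int : ∫ u, κ u p b ^ 2 ∂unif ≤ p b := by
        rw [← hκint]
        refine integral_mono hiκ2 hiκ fun u => ?_
        have h0 := hκ_nonneg u p b
        have h1 := kappa_le_one hκ_nonneg hκ_sum u p b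
        nlinarith
      calc ∫ u, (h u p)^2 ∂unif
          = ∫ u, (κ u p b ^ 2 - 2 * p b * κ u p b + p b ^ 2) ∂unif := by
            exact integral_congr_ae (Filter.Eventually.of_forall fun u => hrw u)
        _ = (∫ u, κ u p b ^ 2 ∂unif) - 2 * p b * (∫ u, κ u p b ∂unif) + p b ^ 2 := by
            have hsub : Integrable (fun u => κ u p b ^ 2 - 2 * p b * κ u p b) unif :=
              hiκ2.sub (hiκ.const_mul _)
            have i1 : ∫ u, (κ u p b ^ 2 - 2 * p b * κ u p b + p b ^ 2) ∂unif
                = (∫ u, (κ u p b ^ 2 - 2 * p b * κ u p b) ∂unif) + ∫ _, (p b ^ 2 : ℝ) ∂unif :=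
              integral_add hsub (integrable_const _)
            have i2 : ∫ u, (κ u p b ^ 2 - 2 * p b * κ u p b) ∂unif
                = (∫ u, κ u p b ^ 2 ∂unif) - ∫ u, 2 * p b * κ u p b ∂unif :=
              integral_sub hiκ2 (hiκ.const_mul _)
            have i3 : ∫ u, 2 * p b * κ u p b ∂unif = 2 * p b * ∫ u, κ u p b ∂unif :=
              integral_const_mul _ _
            rw [i1, i2, i3, integral_const]
            simp
        _ ≤ p b - 2 * p b * p b + p b ^ 2 := by rw [hκint]; linarith
        _ = pepsC ε p b * (1 - pepsC ε p b) := by simp only [pepsC, hc, if_true]; ring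
    · have : ∀ u, h u p = 0 := fun u => by simp [hhdef, hc]
      simp only [this]
      simp [pepsC, hc]
  -- N
  set N : (Fin d → ℝ) → ℝ := fun p => Real.sqrt (∫ u, (h u p)^2 ∂unif) with hNdef
  have hmeasN : Measurable N := by
    refine Real.continuous_sqrt.measurable.comp ?_
    exact (StronglyMeasurable.integral_prod_right'
      (f := fun w : (Fin d → ℝ) × ℝ => (h w.2 w.1)^2)
      ((hmeas_h.comp (measurable_snd.prodMk measurable_fst)).pow
        measurable_const).stronglyMeasurable).measurable
  have hN01 : ∀ p, 0 ≤ N p ∧ N p ≤ 1 := by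
    intro p
    refine ⟨Real.sqrt_nonneg _, ?_⟩
    have : ∫ u, (h u p)^2 ∂unif ≤ 1 := by
      have := integral_mono (hint_bdd unif _ ((hmeas_hu p).pow measurable_const)
        fun u => by rw [abs_of_nonneg (sq_nonneg _)]; nlinarith [hbound u p, abs_nonneg (h u p), sq_abs (h u p), abs_le.mp (hbound u p)])
        (integrable_const (1:ℝ)) (fun u => by nlinarith [sq_abs (h u p), abs_le.mp (hbound u p), abs_nonneg (h u p)])
      simpa using this
    calc N p ≤ Real.sqrt 1 := Real.sqrt_le_sqrt this
      _ = 1 := Real.sqrt_one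
  have hinth2 : ∀ p, Integrable (fun u => (h u p)^2) unif := fun p =>
    hint_bdd unif _ ((hmeas_hu p).pow measurable_const)
      fun u => by rw [abs_of_nonneg (sq_nonneg _)]; nlinarith [sq_abs (h u p), abs_le.mp (hbound u p), abs_nonneg (h u p)]
  -- main chain
  have e0 : ∫ u, (Freal ξ κ ε b u - Z)^2 ∂unif = ∫ u, (∫ p, h u p ∂ξ)^2 ∂unif := by
    refine integral_congr_ae (Filter.Eventually.of_forall fun u => ?_)
    dsimp only
    rw [step1 u]
  rw [e0]
  have e1 : ∀ u, (∫ p, h u p ∂ξ)^2 = ∫ z, h u z.1 * h u z.2 ∂(ξ.prod ξ) := by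
    intro u
    rw [sq, integral_prod_mul]
  have hmeas2 : Measurable fun x : ℝ × ((Fin d → ℝ) × (Fin d → ℝ)) =>
      h x.1 x.2.1 * h x.1 x.2.2 :=
    (hmeas_h.comp (measurable_fst.prodMk (measurable_fst.comp measurable_snd))).mul
      (hmeas_h.comp (measurable_fst.prodMk (measurable_snd.comp measurable_snd)))
  have hb2 : ∀ x : ℝ × ((Fin d → ℝ) × (Fin d → ℝ)), |h x.1 x.2.1 * h x.1 x.2.2| ≤ 1 := by
    intro x
    rw [abs_mul]
    exact mul_le_one₀ (hbound _ _) (abs_nonneg _) (hbound _ _)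
  have e2 : ∫ u, (∫ p, h u p ∂ξ)^2 ∂unif
      = ∫ z, (∫ u, h u z.1 * h u z.2 ∂unif) ∂(ξ.prod ξ) := by
    simp_rw [e1]
    refine integral_integral_swap ?_
    refine hint_bdd _ _ ?_ ?_
    · exact hmeas2
    · exact hb2
  rw [e2]
  have cs : ∀ z : (Fin d → ℝ) × (Fin d → ℝ),
      ∫ u, h u z.1 * h u z.2 ∂unif ≤ N z.1 * N z.2 := by
    intro z
    exact cs_bounded (hmeas_hu z.1).aestronglyMeasurable (hmeas_hu z.2).aestronglyMeasurable
      (fun u => hbound u z.1) (fun u => hbound u z.2)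
  have e3 : ∫ z, (∫ u, h u z.1 * h u z.2 ∂unif) ∂(ξ.prod ξ)
      ≤ ∫ z, N z.1 * N z.2 ∂(ξ.prod ξ) := by
    refine integral_mono ?_ ?_ cs
    · refine hint_bdd _ _ ?_ ?_
      · exact (StronglyMeasurable.integral_prod_right'
          (f := fun w : ((Fin d → ℝ) × (Fin d → ℝ)) × ℝ => h w.2 w.1.1 * h w.2 w.1.2)
          ((hmeas_h.comp (measurable_snd.prodMk
              (measurable_fst.comp measurable_fst))).mul
            (hmeas_h.comp (measurable_snd.prodMk
              (measurable_snd.comp measurable_fst)))).stronglyMeasurable).measurable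
      · intro z
        have hnle := norm_integral_le_of_norm_le_const (μ := unif) (C := 1)
          (f := fun u => h u z.1 * h u z.2)
          (Filter.Eventually.of_forall fun u => by rw [Real.norm_eq_abs]; exact hb2 (u, z))
        rw [Real.norm_eq_abs] at hnle
        simpa using hnle
    · refine hint_bdd _ _ ((hmeasN.comp measurable_fst).mul (hmeasN.comp measurable_snd)) ?_
      intro z
      rw [abs_mul, abs_of_nonneg (hN01 z.1).1, abs_of_nonneg (hN01 z.2).1]
      exact mul_le_one₀ (hN01 z.1).2 (hN01 z.2).1 (hN01 z.2).2
  have e4 : ∫ z, N z.1 * N z.2 ∂(ξ.prod ξ) = (∫ p, N p ∂ξ)^2 := by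
    rw [integral_prod_mul, sq]
  have e5 : ∫ p, N p ∂ξ ≤ ∫ p, Real.sqrt (pepsC ε p b * (1 - pepsC ε p b)) ∂ξ := by
    refine integral_mono_ae (hint_bdd _ _ hmeasN fun p => by
        rw [abs_of_nonneg (hN01 p).1]; exact (hN01 p).2) (integrable_sqrt_peps b) ?_
    filter_upwards [step2] with p hp
    exact Real.sqrt_le_sqrt hp
  calc ∫ z, (∫ u, h u z.1 * h u z.2 ∂unif) ∂(ξ.prod ξ)
      ≤ ∫ z, N z.1 * N z.2 ∂(ξ.prod ξ) := e3
    _ = (∫ p, N p ∂ξ)^2 := e4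
    _ ≤ (∫ p, Real.sqrt (pepsC ε p b * (1 - pepsC ε p b)) ∂ξ)^2 := by
        refine pow_le_pow_left₀ (integral_nonneg fun p => (hN01 p).1) e5 2


lemma map_restrict [SFinite ξ]
    (hκ_meas : Measurable fun x : ℝ × (Fin d → ℝ) => κ x.1 x.2) (b : Fin d) :
    Measure.map (fun x : (ℝ × (Fin d → ℝ)) × Fin d => x.1.1)
      ((tripleLaw ξ κ).restrict {x | x.2 = b ∧ ε < x.1.2 x.2})
      = unif.withDensity (Gdens ξ κ ε b) := by
  ext t ht
  have hf : Measurable fun x : (ℝ × (Fin d → ℝ)) × Fin d => x.1.1 :=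
    measurable_fst.comp measurable_fst
  rw [Measure.map_apply hf ht, Measure.restrict_apply (hf ht), withDensity_apply _ ht]
  exact tripleLaw_E_inter hκ_meas b ht

lemma tripleLaw_E [SFinite ξ]
    (hκ_meas : Measurable fun x : ℝ × (Fin d → ℝ) => κ x.1 x.2) (b : Fin d) :
    tripleLaw ξ κ {x | x.2 = b ∧ ε < x.1.2 x.2} = ∫⁻ u, Gdens ξ κ ε b u ∂unif := by
  have h := tripleLaw_E_inter (ξ := ξ) (κ := κ) (ε := ε) hκ_meas b (t := Set.univ)
    MeasurableSet.univ
  simpa using h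

lemma integrable_Freal [IsProbabilityMeasure ξ]
    (hκ_meas : Measurable fun x : ℝ × (Fin d → ℝ) => κ x.1 x.2)
    (hκ_nonneg : ∀ u p a, 0 ≤ κ u p a) (hκ_sum : ∀ u p, ∑ a, κ u p a = 1) (b : Fin d) :
    Integrable (Freal ξ κ ε b) unif := by
  refine Integrable.mono' (integrable_const (1:ℝ))
    (measurable_Freal hκ_meas b).aestronglyMeasurable
    (Filter.Eventually.of_forall fun u => ?_)
  rw [Real.norm_eq_abs, abs_of_nonneg (Freal_nonneg hκ_nonneg u b)]
  exact Freal_le_one hκ_meas hκ_nonneg hκ_sum u b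

lemma tripleLaw_E_eq_ofReal [IsProbabilityMeasure ξ]
    (hκ_meas : Measurable fun x : ℝ × (Fin d → ℝ) => κ x.1 x.2)
    (hκ_nonneg : ∀ u p a, 0 ≤ κ u p a) (hκ_sum : ∀ u p, ∑ a, κ u p a = 1)
    (hκ_valid : ∀ p : Fin d → ℝ, (∀ a, 0 ≤ p a) → ∑ a, p a = 1 →
      ∀ a, (∫ u in (0:ℝ)..1, κ u p a) = p a)
    (hξ_simplex : ξ {p | (∀ a, 0 ≤ p a) ∧ ∑ a, p a = 1} = 1) (b : Fin d) :
    tripleLaw ξ κ {x | x.2 = b ∧ ε < x.1.2 x.2}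
      = ENNReal.ofReal (∫ p, pepsC ε p b ∂ξ) := by
  rw [tripleLaw_E hκ_meas b, ← integral_Freal hκ_meas hκ_nonneg hκ_sum hκ_valid hξ_simplex b,
    ofReal_integral_eq_lintegral_ofReal (integrable_Freal hκ_meas hκ_nonneg hκ_sum b)
      (Filter.Eventually.of_forall fun u => Freal_nonneg hκ_nonneg u b)]
  exact lintegral_congr fun u => Gdens_eq hκ_meas hκ_nonneg hκ_sum u b

lemma pepsC_nonneg (hε : 0 < ε) (p : Fin d → ℝ) (b : Fin d) : 0 ≤ pepsC ε p b := by
  rw [pepsC]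
  split_ifs with hc
  · exact le_of_lt (lt_trans hε hc)
  · exact le_refl 0

lemma Z_ge (hd : 0 < d) [IsProbabilityMeasure ξ]
    (hκ_meas : Measurable fun x : ℝ × (Fin d → ℝ) => κ x.1 x.2)
    (hκ_nonneg : ∀ u p a, 0 ≤ κ u p a) (hκ_sum : ∀ u p, ∑ a, κ u p a = 1)
    (hκ_valid : ∀ p : Fin d → ℝ, (∀ a, 0 ≤ p a) → ∑ a, p a = 1 →
      ∀ a, (∫ u in (0:ℝ)..1, κ u p a) = p a)
    (hξ_simplex : ξ {p | (∀ a, 0 ≤ p a) ∧ ∑ a, p a = 1} = 1)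
    (hξ_sym : ∀ σ : Equiv.Perm (Fin d), Measure.map (fun p => p ∘ σ) ξ = ξ)
    (hε : 0 < ε)
    (hE : ENNReal.ofReal (1/4) ≤ tripleLaw ξ κ {x | ε < x.1.2 x.2})
    (a : Fin d) : 1 / (4 * (d:ℝ)) ≤ ∫ p, pepsC ε p a ∂ξ := by
  set Z := ∫ p, pepsC ε p a ∂ξ with hZdef
  have hZ0 : 0 ≤ Z := integral_nonneg fun p => pepsC_nonneg hε p a
  have hZb : ∀ b, tripleLaw ξ κ {x | x.2 = b ∧ ε < x.1.2 x.2} = ENNReal.ofReal Z := by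
    intro b
    rw [tripleLaw_E_eq_ofReal hκ_meas hκ_nonneg hκ_sum hκ_valid hξ_simplex b,
      Z_sym hξ_sym a b]
  have hsum : tripleLaw ξ κ {x | ε < x.1.2 x.2} = (d : ℝ≥0∞) * ENNReal.ofReal Z := by
    rw [tripleLaw_event_split hκ_meas]
    simp only [hZb, Finset.sum_const, Finset.card_univ, Fintype.card_fin, nsmul_eq_mul]
  rw [hsum] at hE
  have hcast : (d : ℝ≥0∞) * ENNReal.ofReal Z = ENNReal.ofReal ((d:ℝ) * Z) := by
    rw [ENNReal.ofReal_mul (by positivity), ENNReal.ofReal_natCast]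
  rw [hcast] at hE
  have hreal : (1:ℝ)/4 ≤ (d:ℝ) * Z :=
    (ENNReal.ofReal_le_ofReal_iff (by positivity)).mp hE
  have hdpos : (0:ℝ) < d := Nat.cast_pos.mpr hd
  rw [div_le_iff₀ (by positivity)]
  nlinarith

end Aux

theorem tst : True := trivial

/-- Let `(U,P,A) ∼ λ ⊗ ξ ⊗ κ` with `ξ` a symmetric probability measure on the
simplex and `κ` a valid selection kernel.  Fix `ε ∈ (0,1/2)`, let
`E = {P(A) > ε}` and assume `P(E) ≥ 1/4`.  Then, with `μ(·|a)` the conditional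
law of `U` given `{A = a} ∩ E`,
`χ²(μ(·|a), λ) ≤ 16 d² (E[√(P_ε^c(a)(1 − P_ε^c(a)))])²`. -/
theorem chiSq_cond_law_le {d : ℕ} (hd : 0 < d)
    (ξ : Measure (Fin d → ℝ)) [IsProbabilityMeasure ξ]
    (hξ_simplex : ξ {p | (∀ a, 0 ≤ p a) ∧ ∑ a, p a = 1} = 1)
    (hξ_sym : ∀ σ : Equiv.Perm (Fin d), Measure.map (fun p => p ∘ σ) ξ = ξ)
    (κ : ℝ → (Fin d → ℝ) → Fin d → ℝ)
    (hκ_meas : Measurable fun x : ℝ × (Fin d → ℝ) => κ x.1 x.2)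
    (hκ_nonneg : ∀ u p a, 0 ≤ κ u p a) (hκ_sum : ∀ u p, ∑ a, κ u p a = 1)
    (hκ_valid : ∀ p : Fin d → ℝ, (∀ a, 0 ≤ p a) → ∑ a, p a = 1 →
      ∀ a, (∫ u in (0:ℝ)..1, κ u p a) = p a)
    (ε : ℝ) (hε : ε ∈ Set.Ioo (0:ℝ) (1/2))
    (hE : ENNReal.ofReal (1/4) ≤ tripleLaw ξ κ {x | ε < x.1.2 x.2})
    (a : Fin d) :
    chiSq
      (Measure.map (fun x : (ℝ × (Fin d → ℝ)) × Fin d => x.1.1)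
        ((tripleLaw ξ κ)[|{x | x.2 = a ∧ ε < x.1.2 x.2}]))
      (volume.restrict (Set.Icc (0:ℝ) 1))
    ≤ 16 * d ^ 2 *
        (∫ p, Real.sqrt (pepsC ε p a * (1 - pepsC ε p a)) ∂ξ) ^ 2 := by
  have hε0 : 0 < ε := hε.1
  set Z := ∫ p, pepsC ε p a ∂ξ with hZdef
  set S := ∫ p, Real.sqrt (pepsC ε p a * (1 - pepsC ε p a)) ∂ξ with hSdef
  have hZge : 1 / (4 * (d:ℝ)) ≤ Z :=
    Z_ge hd hκ_meas hκ_nonneg hκ_sum hκ_valid hξ_simplex hξ_sym hε0 hE a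
  have hdpos : (0:ℝ) < d := Nat.cast_pos.mpr hd
  have hZpos : 0 < Z := lt_of_lt_of_le (by positivity) hZge
  have hg_meas : Measurable fun u => (ENNReal.ofReal Z)⁻¹ * Gdens ξ κ ε a u :=
    (measurable_Gdens hκ_meas a).const_mul _
  have hmap : Measure.map (fun x : (ℝ × (Fin d → ℝ)) × Fin d => x.1.1)
      ((tripleLaw ξ κ)[|{x | x.2 = a ∧ ε < x.1.2 x.2}])
      = unif.withDensity (fun u => (ENNReal.ofReal Z)⁻¹ * Gdens ξ κ ε a u) := by
    rw [ProbabilityTheory.cond, Measure.map_smul, map_restrict hκ_meas a,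
      tripleLaw_E_eq_ofReal hκ_meas hκ_nonneg hκ_sum hκ_valid hξ_simplex a,
      ← withDensity_smul _ (measurable_Gdens hκ_meas a)]
    rfl
  have hrn : (Measure.map (fun x : (ℝ × (Fin d → ℝ)) × Fin d => x.1.1)
      ((tripleLaw ξ κ)[|{x | x.2 = a ∧ ε < x.1.2 x.2}])).rnDeriv unif
        =ᵐ[unif] fun u => (ENNReal.ofReal Z)⁻¹ * Gdens ξ κ ε a u := by
    rw [hmap]
    exact Measure.rnDeriv_withDensity unif hg_meas
  have hchi : chiSq
      (Measure.map (fun x : (ℝ × (Fin d → ℝ)) × Fin d => x.1.1)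
        ((tripleLaw ξ κ)[|{x | x.2 = a ∧ ε < x.1.2 x.2}]))
      (volume.restrict (Set.Icc (0:ℝ) 1))
      = ∫ u, (Freal ξ κ ε a u / Z - 1)^2 ∂unif := by
    unfold chiSq
    refine integral_congr_ae ?_
    filter_upwards [hrn] with u hu
    have htr : ((ENNReal.ofReal Z)⁻¹ * Gdens ξ κ ε a u).toReal = Freal ξ κ ε a u / Z := by
      rw [Gdens_eq hκ_meas hκ_nonneg hκ_sum u a, ← ENNReal.div_eq_inv_mul,
        ← ENNReal.ofReal_div_of_pos hZpos,
        ENNReal.toReal_ofReal (div_nonneg (Freal_nonneg hκ_nonneg u a) hZpos.le)]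
    rw [hu, htr]
  rw [hchi]
  have hpt : ∀ u, (Freal ξ κ ε a u / Z - 1)^2 = (Freal ξ κ ε a u - Z)^2 * (1 / Z^2) := by
    intro u
    rw [div_sub_one hZpos.ne', div_pow]
    ring
  have h16 : 1 / Z^2 ≤ 16 * (d:ℝ)^2 := by
    have h1 : 1 / Z ≤ 4 * (d:ℝ) := by
      rw [div_le_iff₀ hZpos]
      have h2 : 1 / (4 * (d:ℝ)) * (4 * (d:ℝ)) ≤ Z * (4 * (d:ℝ)) :=
        mul_le_mul_of_nonneg_right hZge (by positivity)
      rw [div_mul_cancel₀ _ (by positivity : (4:ℝ) * d ≠ 0)] at h2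
      linarith [h2]
    calc 1 / Z^2 = (1 / Z)^2 := by rw [div_pow, one_pow]
      _ ≤ (4 * (d:ℝ))^2 := pow_le_pow_left₀ (by positivity) h1 2
      _ = 16 * (d:ℝ)^2 := by ring
  calc ∫ u, (Freal ξ κ ε a u / Z - 1)^2 ∂unif
      = ∫ u, (Freal ξ κ ε a u - Z)^2 * (1 / Z^2) ∂unif := by
        exact integral_congr_ae (Filter.Eventually.of_forall fun u => hpt u)
    _ = (∫ u, (Freal ξ κ ε a u - Z)^2 ∂unif) * (1 / Z^2) := integral_mul_const _ _
    _ ≤ S^2 * (1 / Z^2) := by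
        refine mul_le_mul_of_nonneg_right ?_ (by positivity)
        exact T_le hκ_meas hκ_nonneg hκ_sum hκ_valid hξ_simplex hε0 a
    _ ≤ S^2 * (16 * (d:ℝ)^2) := mul_le_mul_of_nonneg_left h16 (sq_nonneg S)
    _ = 16 * (d:ℝ)^2 * S^2 := by ring
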